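/- Let A₀, …, A_r ∈ ℝ^{p×n} with r ≥ r*, let O_{r*} = [A₀; …; A_{r*}] have full column rank n, and let W(T) = Σ_{i,j=0}^{r} T^{i+j+1}/((i+j+1) i! j!) A_iᵀ A_j. Then for all 0 < T ≤ 1, λ_min(W(T)) ≥ a_r · T^{2r*+1} · σ_min(O_{r*})² / (r*!)², where a_r > 0 is the minimum eigenvalue of the (r+1)×(r+1) Hilbert matrix. -/

import Mathlib

open Matrix

/-- The Euclidean norm of a finitely-indexed real vector. -/
noncomputable def enorm2 {m : Type*} [Fintype m] (v : m → ℝ) : ℝ :=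
  Real.sqrt (∑ i, v i ^ 2)

/-- The smallest singular value of a matrix: the minimum of `‖M v‖` over unit vectors. -/
noncomputable def sigmaMin {m n : Type*} [Fintype m] [Fintype n]
    (M : Matrix m n ℝ) : ℝ :=
  sInf {x | ∃ v : n → ℝ, enorm2 v = 1 ∧ x = enorm2 (M.mulVec v)}

/-- Minimum eigenvalue of a symmetric matrix, characterized as the minimum of the
quadratic form over unit vectors. -/
noncomputable def lambdaMin {n : Type*} [Fintype n] (W : Matrix n n ℝ) : ℝ :=
  sInf {x | ∃ v : n → ℝ, (∑ i, v i ^ 2) = 1 ∧ x = v ⬝ᵥ W.mulVec v}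

lemma quad_bddBelow {m : Type*} [Fintype m] (M : Matrix m m ℝ) :
    BddBelow {x | ∃ v : m → ℝ, (∑ i, v i ^ 2) = 1 ∧ x = v ⬝ᵥ M.mulVec v} := by
  refine ⟨-(∑ a, ∑ b, |M a b|), ?_⟩
  rintro x ⟨v, hv, rfl⟩
  have habs : ∀ a, |v a| ≤ 1 := by
    intro a
    have h1 : v a ^ 2 ≤ 1 := by
      rw [← hv]
      exact Finset.single_le_sum (f := fun i => v i ^ 2) (fun i _ => sq_nonneg _) (Finset.mem_univ a)
    nlinarith [abs_nonneg (v a), sq_abs (v a)]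
  have : |v ⬝ᵥ M.mulVec v| ≤ ∑ a, ∑ b, |M a b| := by
    simp only [dotProduct, mulVec]
    calc |∑ a, v a * ∑ b, M a b * v b| ≤ ∑ a, |v a * ∑ b, M a b * v b| :=
          Finset.abs_sum_le_sum_abs _ _
      _ ≤ ∑ a, ∑ b, |M a b| := by
          apply Finset.sum_le_sum
          intro a _
          rw [abs_mul]
          calc |v a| * |∑ b, M a b * v b| ≤ 1 * ∑ b, |M a b * v b| := by
                apply mul_le_mul (habs a) (Finset.abs_sum_le_sum_abs _ _) (abs_nonneg _) zero_le_one
            _ = ∑ b, |M a b| * |v b| := by rw [one_mul]; simp [abs_mul]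
            _ ≤ ∑ b, |M a b| * 1 := by
                apply Finset.sum_le_sum; intro b _
                exact mul_le_mul_of_nonneg_left (habs b) (abs_nonneg _)
            _ = ∑ b, |M a b| := by simp
  linarith [neg_abs_le (v ⬝ᵥ M.mulVec v)]

lemma lambdaMin_mul_le {m : Type*} [Fintype m] (M : Matrix m m ℝ) (z : m → ℝ) :
    lambdaMin M * (∑ i, z i ^ 2) ≤ z ⬝ᵥ M.mulVec z := by
  set S := ∑ i, z i ^ 2 with hS
  have hS0 : 0 ≤ S := Finset.sum_nonneg fun i _ => sq_nonneg _
  rcases eq_or_lt_of_le hS0 with h | h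
  · have hz : ∀ i, z i = 0 := by
      intro i
      have := (Finset.sum_eq_zero_iff_of_nonneg (fun i _ => sq_nonneg (z i))).mp h.symm i (Finset.mem_univ i)
      exact pow_eq_zero_iff (by norm_num) |>.mp this
    have : z = 0 := funext hz
    subst this
    simp [← h]
  · have hs : (0:ℝ) < Real.sqrt S := Real.sqrt_pos.mpr h
    set c : ℝ := (Real.sqrt S)⁻¹ with hc
    have hmem : c ^ 2 * (z ⬝ᵥ M.mulVec z) ∈ {x | ∃ v : m → ℝ, (∑ i, v i ^ 2) = 1 ∧ x = v ⬝ᵥ M.mulVec v} := by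
      refine ⟨c • z, ?_, ?_⟩
      · have : ∑ i, (c • z) i ^ 2 = c ^ 2 * S := by
          rw [hS, Finset.mul_sum]
          apply Finset.sum_congr rfl
          intro i _
          simp [mul_pow]
        rw [this, hc]
        rw [inv_pow, Real.sq_sqrt hS0]
        field_simp
      · rw [Matrix.mulVec_smul, dotProduct_smul, smul_dotProduct]
        simp [smul_smul]
        ring
    have hle : lambdaMin M ≤ c ^ 2 * (z ⬝ᵥ M.mulVec z) := csInf_le (quad_bddBelow M) hmem
    have hc2 : c ^ 2 = S⁻¹ := by
      rw [hc]; rw [← Real.sqrt_inv]; exact Real.sq_sqrt (by positivity)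
    rw [hc2] at hle
    calc lambdaMin M * S ≤ (S⁻¹ * (z ⬝ᵥ M.mulVec z)) * S := by
          exact mul_le_mul_of_nonneg_right hle hS0
      _ = z ⬝ᵥ M.mulVec z := by field_simp

lemma hilbert_quad_nonneg {r : ℕ} (Hil : Matrix (Fin (r+1)) (Fin (r+1)) ℝ)
    (hHil : ∀ i j : Fin (r + 1),
      Hil i j = (1 : ℝ) / (((i : ℕ) + (j : ℕ) + 1 : ℕ) : ℝ))
    (v : Fin (r+1) → ℝ) : 0 ≤ v ⬝ᵥ Hil.mulVec v := by
  have key : v ⬝ᵥ Hil.mulVec v = ∫ x in (0:ℝ)..1, (∑ i : Fin (r+1), v i * x ^ (i:ℕ)) ^ 2 := by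
    have hint : ∀ x : ℝ, (∑ i : Fin (r+1), v i * x ^ (i:ℕ)) ^ 2
        = ∑ i : Fin (r+1), ∑ j : Fin (r+1), v i * v j * x ^ ((i:ℕ)+(j:ℕ)) := by
      intro x
      rw [sq, Finset.sum_mul_sum]
      apply Finset.sum_congr rfl; intro i _
      apply Finset.sum_congr rfl; intro j _
      rw [pow_add]; ring
    rw [intervalIntegral.integral_congr (g := fun x => ∑ i : Fin (r+1), ∑ j : Fin (r+1), v i * v j * x ^ ((i:ℕ)+(j:ℕ))) (fun x _ => hint x)]
    rw [intervalIntegral.integral_finset_sum]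
    · simp only [dotProduct, mulVec]
      apply Finset.sum_congr rfl; intro i _
      rw [intervalIntegral.integral_finset_sum]
      · rw [Finset.mul_sum]
        apply Finset.sum_congr rfl; intro j _
        rw [intervalIntegral.integral_const_mul, integral_pow, hHil]
        push_cast
        ring
      · intro j _
        exact Continuous.intervalIntegrable (by fun_prop) _ _
    · intro i _
      exact Continuous.intervalIntegrable (by fun_prop) _ _
  rw [key]
  apply intervalIntegral.integral_nonneg (by norm_num)
  intro x _
  positivity

lemma dot_sum_mulVec {m : Type*} {ι : Type*} [Fintype m] (s : Finset ι)
    (M : ι → Matrix m m ℝ) (v : m → ℝ) :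
    v ⬝ᵥ (∑ i ∈ s, M i).mulVec v = ∑ i ∈ s, v ⬝ᵥ (M i).mulVec v := by
  classical
  induction s using Finset.induction with
  | empty => simp
  | insert _ _ h ih =>
    rw [Finset.sum_insert h, Finset.sum_insert h, Matrix.add_mulVec, dotProduct_add, ih]

theorem stmt7 {p n : ℕ} (r rs : ℕ) (hr : rs ≤ r)
    (A : ℕ → Matrix (Fin p) (Fin n) ℝ)
    (Ors : Matrix (Fin (rs + 1) × Fin p) (Fin n) ℝ)
    (hOrs : ∀ k i j, Ors (k, i) j = A k i j)
    (hrank : Ors.rank = n)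
    (Hil : Matrix (Fin (r + 1)) (Fin (r + 1)) ℝ)
    (hHil : ∀ i j : Fin (r + 1),
      Hil i j = (1 : ℝ) / (((i : ℕ) + (j : ℕ) + 1 : ℕ) : ℝ))
    (W : ℝ → Matrix (Fin n) (Fin n) ℝ)
    (hW : ∀ T : ℝ, W T = ∑ i ∈ Finset.range (r + 1), ∑ j ∈ Finset.range (r + 1),
      (T ^ (i + j + 1) /
        (((i + j + 1) * Nat.factorial i * Nat.factorial j : ℕ) : ℝ)) • ((A i)ᵀ * A j)) :
    ∀ T : ℝ, 0 < T → T ≤ 1 →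
      lambdaMin Hil * T ^ (2 * rs + 1) * (sigmaMin Ors) ^ 2 / (Nat.factorial rs : ℝ) ^ 2 ≤
        lambdaMin (W T) := by
  intro T hT hT1
  have hlmH : 0 ≤ lambdaMin Hil :=
    Real.sInf_nonneg (by rintro x ⟨u, hu, rfl⟩; exact hilbert_quad_nonneg Hil hHil u)
  have hsig0 : 0 ≤ sigmaMin Ors :=
    Real.sInf_nonneg (by rintro x ⟨u, hu, rfl⟩; exact Real.sqrt_nonneg _)
  have hfacpos : ∀ m : ℕ, (0:ℝ) < (Nat.factorial m : ℝ) := by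
    intro m; exact_mod_cast Nat.factorial_pos m
  by_cases hn : n = 0
  · subst hn
    have h1 : lambdaMin (W T) = 0 := by
      unfold lambdaMin
      convert Real.sInf_empty using 2
      rw [Set.eq_empty_iff_forall_notMem]
      rintro x ⟨u, hu, -⟩
      simp at hu
    have h2 : sigmaMin Ors = 0 := by
      unfold sigmaMin
      convert Real.sInf_empty using 2
      rw [Set.eq_empty_iff_forall_notMem]
      rintro x ⟨u, hu, -⟩
      unfold enorm2 at hu
      simp at hu
    rw [h1, h2]
    simp
  · -- the set of quadratic-form values is nonempty
    have hnpos : 0 < n := Nat.pos_of_ne_zero hn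
    apply le_csInf
    · refine ⟨(Pi.single (⟨0, hnpos⟩ : Fin n) (1:ℝ)) ⬝ᵥ (W T).mulVec (Pi.single ⟨0, hnpos⟩ 1),
        Pi.single ⟨0, hnpos⟩ 1, ?_, rfl⟩
      rw [Finset.sum_eq_single (⟨0, hnpos⟩ : Fin n)]
      · simp
      · intro b _ hb; simp [Pi.single_apply, hb]
      · intro h; exact absurd (Finset.mem_univ _) h
    rintro x ⟨v, hv, rfl⟩
    -- notation
    set w : ℕ → Fin p → ℝ := fun i => (A i).mulVec v with hw
    set z : Fin p → Fin (r+1) → ℝ := fun k i => T ^ (i:ℕ) / (Nat.factorial (i:ℕ) : ℝ) * w (i:ℕ) k with hz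
    -- key identity
    have hQ : v ⬝ᵥ (W T).mulVec v = T * ∑ k : Fin p, (z k) ⬝ᵥ Hil.mulVec (z k) := by
      rw [hW, dot_sum_mulVec]
      have step : ∀ i ∈ Finset.range (r+1),
          v ⬝ᵥ (∑ j ∈ Finset.range (r + 1),
            (T ^ (i + j + 1) /
              (((i + j + 1) * Nat.factorial i * Nat.factorial j : ℕ) : ℝ)) • ((A i)ᵀ * A j)).mulVec v
          = ∑ j ∈ Finset.range (r+1),
            T * (T ^ i / (Nat.factorial i : ℝ) * (T ^ j / (Nat.factorial j : ℝ)) *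
              ((1:ℝ) / ((i:ℝ) + (j:ℝ) + 1)) * ∑ k, w i k * w j k) := by
        intro i _
        rw [dot_sum_mulVec]
        apply Finset.sum_congr rfl; intro j _
        rw [Matrix.smul_mulVec, dotProduct_smul, ← Matrix.mulVec_mulVec,
          Matrix.dotProduct_mulVec, Matrix.vecMul_transpose]
        have hdp : (A i).mulVec v ⬝ᵥ (A j).mulVec v = ∑ k, w i k * w j k := rfl
        rw [hdp, smul_eq_mul]
        have h1 : ((((i + j + 1) * Nat.factorial i * Nat.factorial j : ℕ)) : ℝ)
            = ((i:ℝ) + (j:ℝ) + 1) * (Nat.factorial i : ℝ) * (Nat.factorial j : ℝ) := by push_cast; ring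
        rw [h1]
        have h2 : (0:ℝ) < (i:ℝ) + (j:ℝ) + 1 := by positivity
        rw [pow_add, pow_add, pow_one]
        field_simp
      rw [Finset.sum_congr rfl step]
      -- now expand the RHS
      have expand : ∑ k : Fin p, (z k) ⬝ᵥ Hil.mulVec (z k)
          = ∑ i ∈ Finset.range (r+1), ∑ j ∈ Finset.range (r+1),
            T ^ i / (Nat.factorial i : ℝ) * (T ^ j / (Nat.factorial j : ℝ)) *
              ((1:ℝ) / ((i:ℝ) + (j:ℝ) + 1)) * ∑ k, w i k * w j k := by
        have e1 : ∀ k : Fin p, (z k) ⬝ᵥ Hil.mulVec (z k)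
            = ∑ i : Fin (r+1), ∑ j : Fin (r+1),
              T ^ (i:ℕ) / (Nat.factorial (i:ℕ) : ℝ) * (T ^ (j:ℕ) / (Nat.factorial (j:ℕ) : ℝ)) *
                ((1:ℝ) / (((i:ℕ):ℝ) + ((j:ℕ):ℝ) + 1)) * (w (i:ℕ) k * w (j:ℕ) k) := by
          intro k
          simp only [dotProduct, mulVec, Finset.mul_sum]
          apply Finset.sum_congr rfl; intro i _
          apply Finset.sum_congr rfl; intro j _
          rw [hHil, hz]
          push_cast
          ring
        rw [Finset.sum_congr rfl (fun k _ => e1 k)]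
        rw [Finset.sum_comm]
        have e2 : ∀ f : ℕ → ℝ, ∑ i : Fin (r+1), f (i:ℕ) = ∑ i ∈ Finset.range (r+1), f i :=
          fun f => Fin.sum_univ_eq_sum_range f (r+1)
        rw [e2 (fun i => ∑ k : Fin p, ∑ j : Fin (r+1),
          T ^ i / (Nat.factorial i : ℝ) * (T ^ (j:ℕ) / (Nat.factorial (j:ℕ) : ℝ)) *
            ((1:ℝ) / ((i:ℝ) + ((j:ℕ):ℝ) + 1)) * (w i k * w (j:ℕ) k))]
        apply Finset.sum_congr rfl; intro i _
        rw [Finset.sum_comm]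
        rw [e2 (fun j => ∑ k : Fin p,
          T ^ i / (Nat.factorial i : ℝ) * (T ^ j / (Nat.factorial j : ℝ)) *
            ((1:ℝ) / ((i:ℝ) + (j:ℝ) + 1)) * (w i k * w j k))]
        apply Finset.sum_congr rfl; intro j _
        rw [Finset.mul_sum]
      rw [expand, Finset.mul_sum]
      apply Finset.sum_congr rfl; intro i _
      rw [Finset.mul_sum]
    -- lower bound the quadratic form
    have hzsum : ∑ k : Fin p, ∑ i : Fin (r+1), (z k i) ^ 2
        = ∑ i ∈ Finset.range (r+1), (T ^ i / (Nat.factorial i : ℝ)) ^ 2 * ∑ k, w i k ^ 2 := by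
      rw [Finset.sum_comm]
      have e2 : ∀ f : ℕ → ℝ, ∑ i : Fin (r+1), f (i:ℕ) = ∑ i ∈ Finset.range (r+1), f i :=
        fun f => Fin.sum_univ_eq_sum_range f (r+1)
      rw [e2 (fun i => ∑ k : Fin p, (T ^ i / (Nat.factorial i : ℝ) * w i k) ^ 2)]
      apply Finset.sum_congr rfl; intro i _
      rw [Finset.mul_sum]
      apply Finset.sum_congr rfl; intro k _
      rw [mul_pow]
    have hmain : T * (lambdaMin Hil * ∑ k : Fin p, ∑ i : Fin (r+1), (z k i) ^ 2)
        ≤ v ⬝ᵥ (W T).mulVec v := by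
      rw [hQ]
      apply mul_le_mul_of_nonneg_left _ hT.le
      rw [Finset.mul_sum]
      exact Finset.sum_le_sum fun k _ => lambdaMin_mul_le Hil (z k)
    -- sums of squared norms
    set Si : ℕ → ℝ := fun i => ∑ k, w i k ^ 2 with hSi
    have hSinn : ∀ i, 0 ≤ Si i := fun i => Finset.sum_nonneg fun k _ => sq_nonneg _
    have hstep1 : ∑ i ∈ Finset.range (rs+1), (T ^ i / (Nat.factorial i : ℝ)) ^ 2 * Si i
        ≤ ∑ i ∈ Finset.range (r+1), (T ^ i / (Nat.factorial i : ℝ)) ^ 2 * Si i := by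
      apply Finset.sum_le_sum_of_subset_of_nonneg
      · exact Finset.range_subset_range.mpr (by omega)
      · intro i _ _
        have := hSinn i
        positivity
    have hstep2 : (T ^ rs / (Nat.factorial rs : ℝ)) ^ 2 * ∑ i ∈ Finset.range (rs+1), Si i
        ≤ ∑ i ∈ Finset.range (rs+1), (T ^ i / (Nat.factorial i : ℝ)) ^ 2 * Si i := by
      rw [Finset.mul_sum]
      apply Finset.sum_le_sum
      intro i hi
      have hile : i ≤ rs := Nat.lt_succ_iff.mp (Finset.mem_range.mp hi)
      have hp1 : T ^ rs ≤ T ^ i := pow_le_pow_of_le_one hT.le hT1 hile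
      have hp2 : (Nat.factorial i : ℝ) ≤ (Nat.factorial rs : ℝ) := by
        exact_mod_cast Nat.factorial_le hile
      have hdiv : T ^ rs / (Nat.factorial rs : ℝ) ≤ T ^ i / (Nat.factorial i : ℝ) :=
        div_le_div₀ (by positivity) hp1 (hfacpos i) hp2
      have hsq : (T ^ rs / (Nat.factorial rs : ℝ)) ^ 2 ≤ (T ^ i / (Nat.factorial i : ℝ)) ^ 2 :=
        pow_le_pow_left₀ (by positivity) hdiv 2
      exact mul_le_mul_of_nonneg_right hsq (hSinn i)
    -- relate to Ors
    have hOv : ∑ i ∈ Finset.range (rs+1), Si i = ∑ q : Fin (rs+1) × Fin p, (Ors.mulVec v q) ^ 2 := by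
      rw [Fintype.sum_prod_type]
      have e2 : ∀ f : ℕ → ℝ, ∑ i : Fin (rs+1), f (i:ℕ) = ∑ i ∈ Finset.range (rs+1), f i :=
        fun f => Fin.sum_univ_eq_sum_range f (rs+1)
      rw [← e2 (fun i => Si i)]
      apply Finset.sum_congr rfl; intro i _
      apply Finset.sum_congr rfl; intro k _
      congr 1
      simp only [mulVec, dotProduct, hw]
      apply Finset.sum_congr rfl; intro j _
      rw [hOrs]
    have henv : enorm2 v = 1 := by unfold enorm2; rw [hv]; exact Real.sqrt_one
    have hsig_le : sigmaMin Ors ≤ enorm2 (Ors.mulVec v) := by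
      apply csInf_le
      · exact ⟨0, by rintro x ⟨u, _, rfl⟩; exact Real.sqrt_nonneg _⟩
      · exact ⟨v, henv, rfl⟩
    have hsq : (sigmaMin Ors) ^ 2 ≤ ∑ q : Fin (rs+1) × Fin p, (Ors.mulVec v q) ^ 2 := by
      have h1 : (enorm2 (Ors.mulVec v)) ^ 2 = ∑ q : Fin (rs+1) × Fin p, (Ors.mulVec v q) ^ 2 := by
        unfold enorm2
        exact Real.sq_sqrt (Finset.sum_nonneg fun q _ => sq_nonneg _)
      rw [← h1]
      exact pow_le_pow_left₀ hsig0 hsig_le 2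
    -- combine everything
    have hcoef : (0:ℝ) ≤ (T ^ rs / (Nat.factorial rs : ℝ)) ^ 2 := by positivity
    calc lambdaMin Hil * T ^ (2 * rs + 1) * (sigmaMin Ors) ^ 2 / (Nat.factorial rs : ℝ) ^ 2
        = T * (lambdaMin Hil * ((T ^ rs / (Nat.factorial rs : ℝ)) ^ 2 * (sigmaMin Ors) ^ 2)) := by
          have hf := (hfacpos rs).ne'
          field_simp
          ring
      _ ≤ T * (lambdaMin Hil * ((T ^ rs / (Nat.factorial rs : ℝ)) ^ 2 *
            ∑ q : Fin (rs+1) × Fin p, (Ors.mulVec v q) ^ 2)) := by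
          apply mul_le_mul_of_nonneg_left _ hT.le
          apply mul_le_mul_of_nonneg_left _ hlmH
          exact mul_le_mul_of_nonneg_left hsq hcoef
      _ = T * (lambdaMin Hil * ((T ^ rs / (Nat.factorial rs : ℝ)) ^ 2 *
            ∑ i ∈ Finset.range (rs+1), Si i)) := by rw [hOv]
      _ ≤ T * (lambdaMin Hil * ∑ i ∈ Finset.range (r+1), (T ^ i / (Nat.factorial i : ℝ)) ^ 2 * Si i) := by
          apply mul_le_mul_of_nonneg_left _ hT.le
          exact mul_le_mul_of_nonneg_left (hstep2.trans hstep1) hlmH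
      _ = T * (lambdaMin Hil * ∑ k : Fin p, ∑ i : Fin (r+1), (z k i) ^ 2) := by rw [hzsum]
      _ ≤ v ⬝ᵥ (W T).mulVec v := hmain
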